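/- Let A and Θ be types, u : A → Θ → ℝ, f₋, f₊ : Θ → ℝ with −f₋(θ') ≤ u(a, θ') ≤ f₊(θ') for all a, θ'. Let θ : ℕ → Θ be a fixed sequence, T ≥ 1, (Ω, 𝓕, μ) a probability space, ξ : Ω → List Θ a random perturbation sequence, and P : Ω → ℕ → A a map such that for μ-almost every ω and every t with 0 ≤ t ≤ T, P(ω, t) maximizes a ↦ ∑_{x ∈ ξ(ω)} u(a, x) + ∑_{s=1}^{t} u(a, θ(s)) over A. Assume each function ω ↦ u(P(ω, t), θ(s)) (for 0 ≤ t ≤ T, 1 ≤ s ≤ T) and ω ↦ ∑_{x ∈ ξ(ω)} (f₋(x) + f₊(x)) is integrable with respect to μ. Suppose moreover the stability property: for every t with 1 ≤ t ≤ T, ∫_Ω (u(P(ω, t), θ(t)) − u(P(ω, t−1), θ(t))) dμ(ω) ≤ g(t). Then for every a* ∈ A, ∫_Ω ∑_{t=1}^{T} (u(a*, θ(t)) − u(P(ω, t−1), θ(t))) dμ(ω) ≤ ∑_{t=1}^{T} g(t) + ∫_Ω ∑_{x ∈ ξ(ω)} (f₋(x) + f₊(x)) dμ(ω). -/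

import Mathlib

open MeasureTheory

/-- **General regret bound for Follow-The-Perturbed-Leader with sample perturbations.**
The learner augments the history with a random fake history `ξ ω` drawn once, and at step `t`
plays the optimizer `P ω (t-1)` of cumulative utility on the augmented history. Under the
stability property, its expected regret against an oblivious adversary is bounded by the
cumulative stability plus the expected total payoff range of the fake samples. -/
theorem ftpl_general_regret {A Θ : Type*} {Ω : Type*} [MeasurableSpace Ω]
    (μ : Measure Ω) [IsProbabilityMeasure μ]
    (u : A → Θ → ℝ) (fm fp : Θ → ℝ)
    (hbound : ∀ (a : A) (θ' : Θ), -fm θ' ≤ u a θ' ∧ u a θ' ≤ fp θ')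
    (θ : ℕ → Θ) (T : ℕ) (hT : 1 ≤ T)
    (ξ : Ω → List Θ) (P : Ω → ℕ → A) (g : ℕ → ℝ)
    (hopt : ∀ᵐ ω ∂μ, ∀ t ≤ T, ∀ a : A,
      ((ξ ω).map (fun x => u (P ω t) x)).sum + ∑ s ∈ Finset.Icc 1 t, u (P ω t) (θ s) ≥
        ((ξ ω).map (fun x => u a x)).sum + ∑ s ∈ Finset.Icc 1 t, u a (θ s))
    (hint : ∀ t ≤ T, ∀ s, 1 ≤ s → s ≤ T →
      Integrable (fun ω => u (P ω t) (θ s)) μ)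
    (hint' : Integrable (fun ω => ((ξ ω).map (fun x => fm x + fp x)).sum) μ)
    (hstab : ∀ t, 1 ≤ t → t ≤ T →
      ∫ ω, (u (P ω t) (θ t) - u (P ω (t - 1)) (θ t)) ∂μ ≤ g t) :
    ∀ a : A,
      ∫ ω, (∑ t ∈ Finset.Icc 1 T, (u a (θ t) - u (P ω (t - 1)) (θ t))) ∂μ ≤
        ∑ t ∈ Finset.Icc 1 T, g t +
          ∫ ω, ((ξ ω).map (fun x => fm x + fp x)).sum ∂μ := by
  intro a
  -- list helper: the gap between two ξ-payoffs is bounded by the range sum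
  have hlist : ∀ (b c : A) (l : List Θ),
      (l.map (fun x => u b x)).sum - (l.map (fun x => u c x)).sum ≤
        (l.map (fun x => fm x + fp x)).sum := by
    intro b c l
    induction l with
    | nil => simp
    | cons x xs ih =>
      simp only [List.map_cons, List.sum_cons]
      have h1 := (hbound b x).2
      have h2 := (hbound c x).1
      linarith
  -- a.e. be-the-leader bound
  have hbtl : ∀ᵐ ω ∂μ,
      ∑ t ∈ Finset.Icc 1 T, (u a (θ t) - u (P ω t) (θ t)) ≤
        ((ξ ω).map (fun x => fm x + fp x)).sum := by
    filter_upwards [hopt] with ω hω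
    have key : ∀ t, t ≤ T → ∀ b : A,
        ((ξ ω).map (fun x => u b x)).sum + ∑ s ∈ Finset.Icc 1 t, u b (θ s) ≤
        ((ξ ω).map (fun x => u (P ω 0) x)).sum +
          ∑ s ∈ Finset.Icc 1 t, u (P ω s) (θ s) := by
      intro t
      induction t with
      | zero => intro _ b; simpa using hω 0 (Nat.zero_le T) b
      | succ n ih =>
        intro hn b
        have hn' : n ≤ T := Nat.le_of_succ_le hn
        have h1 := hω (n + 1) hn b
        have h2 := ih hn' (P ω (n + 1))
        simp only [Finset.sum_Icc_succ_top (Nat.succ_le_succ (Nat.zero_le n))] at h1 ⊢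
        linarith
    have h := key T le_rfl a
    have h2 := hlist (P ω 0) a (ξ ω)
    rw [Finset.sum_sub_distrib]
    linarith
  have hI1 : Integrable
      (fun ω => ∑ t ∈ Finset.Icc 1 T, (u a (θ t) - u (P ω t) (θ t))) μ := by
    apply integrable_finset_sum
    intro t ht
    rw [Finset.mem_Icc] at ht
    exact (integrable_const _).sub (hint t ht.2 t ht.1 ht.2)
  have hI2 : Integrable
      (fun ω => ∑ t ∈ Finset.Icc 1 T, (u (P ω t) (θ t) - u (P ω (t - 1)) (θ t))) μ := by
    apply integrable_finset_sum
    intro t ht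
    rw [Finset.mem_Icc] at ht
    exact (hint t ht.2 t ht.1 ht.2).sub
      (hint (t - 1) (le_trans (Nat.sub_le t 1) ht.2) t ht.1 ht.2)
  have heq : (fun ω => ∑ t ∈ Finset.Icc 1 T, (u a (θ t) - u (P ω (t - 1)) (θ t))) =
      (fun ω => (∑ t ∈ Finset.Icc 1 T, (u a (θ t) - u (P ω t) (θ t))) +
        ∑ t ∈ Finset.Icc 1 T, (u (P ω t) (θ t) - u (P ω (t - 1)) (θ t))) := by
    funext ω
    rw [← Finset.sum_add_distrib]
    exact Finset.sum_congr rfl fun t _ => by ring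
  rw [heq, integral_add hI1 hI2]
  have hA : ∫ ω, (∑ t ∈ Finset.Icc 1 T, (u a (θ t) - u (P ω t) (θ t))) ∂μ ≤
      ∫ ω, ((ξ ω).map (fun x => fm x + fp x)).sum ∂μ :=
    integral_mono_ae hI1 hint' hbtl
  have hB : ∫ ω, (∑ t ∈ Finset.Icc 1 T, (u (P ω t) (θ t) - u (P ω (t - 1)) (θ t))) ∂μ ≤
      ∑ t ∈ Finset.Icc 1 T, g t := by
    rw [integral_finset_sum]
    · apply Finset.sum_le_sum
      intro t ht
      rw [Finset.mem_Icc] at ht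
      exact hstab t ht.1 ht.2
    · intro t ht
      rw [Finset.mem_Icc] at ht
      exact (hint t ht.2 t ht.1 ht.2).sub
        (hint (t - 1) (le_trans (Nat.sub_le t 1) ht.2) t ht.1 ht.2)
  linarith
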